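/- Analytic core of Theorem 5.3 (volume part): Let k > 0, C₆ ≥ 0 and δ > 0. Let V : [0,∞) → (0,∞) be locally Lipschitz such that at almost every λ ≥ 0 at which V is differentiable, |V'(λ) − k² V(λ)| ≤ (3/2) k² C₆ e^{−(2/3)k²λ} V(λ). Then for every λ₀ ≥ 0 satisfying (9/4) C₆ e^{−(2/3)k²λ₀} ≤ log(1+δ), and every λ ≥ λ₀, one has (1+δ)^{−1} ≤ V(λ) / (V(λ₀) e^{k²(λ−λ₀)}) ≤ 1+δ. -/

import Mathlib

open Set MeasureTheory

open Filter intervalIntegral Topology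

lemma diffquot_tendsto_of_hasDerivAt {f : ℝ → ℝ} {x d : ℝ} (hf : HasDerivAt f d x) :
    Tendsto (fun n : ℕ => (f (x + ((n : ℝ) + 1)⁻¹) - f x) / ((n : ℝ) + 1)⁻¹) atTop (𝓝 d) := by
  have hh : Tendsto (fun n : ℕ => ((n : ℝ) + 1)⁻¹) atTop (𝓝 0) := by
    simpa [one_div] using tendsto_one_div_add_atTop_nhds_zero_nat (𝕜 := ℝ)
  have h1 : Tendsto (fun n : ℕ => x + ((n : ℝ) + 1)⁻¹) atTop (𝓝[≠] x) := by
    apply tendsto_nhdsWithin_of_tendsto_nhds_of_eventually_within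
    · simpa using tendsto_const_nhds.add hh
    · filter_upwards with n
      have : (0 : ℝ) < ((n : ℝ) + 1)⁻¹ := by positivity
      simp only [Set.mem_compl_iff, Set.mem_singleton_iff]
      intro h; nlinarith
  have h2 := (hasDerivAt_iff_tendsto_slope.1 hf).comp h1
  refine h2.congr fun n => ?_
  have hne : ((n : ℝ) + 1)⁻¹ ≠ 0 := by positivity
  simp [Function.comp, slope_def_field, div_eq_div_iff]

lemma lipschitz_ftc {g : ℝ → ℝ} {C : NNReal} (hg : LipschitzWith C g) (a b : ℝ) :
    g b - g a = ∫ x in a..b, deriv g x := by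
  have hgc : Continuous g := hg.continuous
  have hint : ∀ c d : ℝ, IntervalIntegrable g volume c d := fun c d => hgc.intervalIntegrable c d
  set F : ℕ → ℝ → ℝ := fun n x => (g (x + ((n : ℝ) + 1)⁻¹) - g x) / ((n : ℝ) + 1)⁻¹ with hF
  have hFc : ∀ n, Continuous (F n) := by
    intro n
    exact ((hgc.comp (continuous_id.add continuous_const)).sub hgc).div_const _
  have hlim : Tendsto (fun n => ∫ x in a..b, F n x) atTop (𝓝 (∫ x in a..b, deriv g x)) := by
    apply intervalIntegral.tendsto_integral_filter_of_dominated_convergence (fun _ => (C : ℝ))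
    · exact Eventually.of_forall fun n => (hFc n).aestronglyMeasurable
    · refine Eventually.of_forall fun n => Eventually.of_forall fun x _ => ?_
      have ht : (0 : ℝ) < ((n : ℝ) + 1)⁻¹ := by positivity
      have h1 : |g (x + ((n : ℝ) + 1)⁻¹) - g x| ≤ C * ((n : ℝ) + 1)⁻¹ := by
        have := hg.dist_le_mul (x + ((n : ℝ) + 1)⁻¹) x
        have hn1 : (0:ℝ) < (n:ℝ) + 1 := by positivity
        simpa [Real.dist_eq, abs_of_pos ht, abs_of_pos hn1] using this
      rw [Real.norm_eq_abs, abs_div, abs_of_pos ht, div_le_iff₀ ht]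
      calc |g (x + ((n : ℝ) + 1)⁻¹) - g x| ≤ C * ((n : ℝ) + 1)⁻¹ := h1
        _ = C * ((n : ℝ) + 1)⁻¹ := rfl
    · exact intervalIntegrable_const
    · filter_upwards [hg.ae_differentiableAt (μ := volume)] with x hx _
      exact diffquot_tendsto_of_hasDerivAt hx.hasDerivAt
  have hc : ∀ c : ℝ,
      Tendsto (fun n : ℕ => (∫ x in c..(c + ((n : ℝ) + 1)⁻¹), g x) / ((n : ℝ) + 1)⁻¹)
        atTop (𝓝 (g c)) := by
    intro c
    have hd : HasDerivAt (fun u => ∫ x in c..u, g x) (g c) c :=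
      intervalIntegral.integral_hasDerivAt_right (hint c c)
        hgc.stronglyMeasurable.stronglyMeasurableAtFilter hgc.continuousAt
    have := diffquot_tendsto_of_hasDerivAt hd
    refine this.congr fun n => ?_
    simp
  have hIeq : ∀ n : ℕ, (∫ x in a..b, F n x) =
      ((∫ x in b..(b + ((n : ℝ) + 1)⁻¹), g x) / ((n : ℝ) + 1)⁻¹)
        - (∫ x in a..(a + ((n : ℝ) + 1)⁻¹), g x) / ((n : ℝ) + 1)⁻¹ := by
    intro n
    set t : ℝ := ((n : ℝ) + 1)⁻¹ with hts
    have h1 : (∫ x in a..b, F n x) = ((∫ x in a..b, g (x + t)) - ∫ x in a..b, g x) / t := by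
      show (∫ x in a..b, (g (x + t) - g x) / t) = _
      rw [intervalIntegral.integral_div]
      congr 1
      refine intervalIntegral.integral_sub ?_ (hint a b)
      exact (hgc.comp (by continuity : Continuous fun x : ℝ => x + t)).intervalIntegrable a b
    have h2 : (∫ x in a..b, g (x + t)) = ∫ x in (a+t)..(b+t), g x :=
      intervalIntegral.integral_comp_add_right g t
    have h3 : (∫ x in a..(a+t), g x) + (∫ x in (a+t)..(b+t), g x) = ∫ x in a..(b+t), g x :=
      intervalIntegral.integral_add_adjacent_intervals (hint _ _) (hint _ _)
    have h4 : (∫ x in a..b, g x) + (∫ x in b..(b+t), g x) = ∫ x in a..(b+t), g x :=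
      intervalIntegral.integral_add_adjacent_intervals (hint _ _) (hint _ _)
    rw [h1, h2]
    rw [div_sub_div_same]
    congr 1
    linarith
  have hlim2 : Tendsto (fun n => ∫ x in a..b, F n x) atTop (𝓝 (g b - g a)) := by
    simp_rw [hIeq]
    exact (hc b).sub (hc a)
  exact tendsto_nhds_unique hlim2 hlim

lemma abs_log_sub_log_le {m u v : ℝ} (hm : 0 < m) (hu : m ≤ u) (hv : m ≤ v) :
    |Real.log u - Real.log v| ≤ |u - v| / m := by
  have key : ∀ u v : ℝ, m ≤ u → m ≤ v → Real.log u - Real.log v ≤ |u - v| / m := by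
    intro u v hu hv
    have hu0 : 0 < u := lt_of_lt_of_le hm hu
    have hv0 : 0 < v := lt_of_lt_of_le hm hv
    rw [← Real.log_div hu0.ne' hv0.ne']
    have h1 : Real.log (u / v) ≤ u / v - 1 := Real.log_le_sub_one_of_pos (by positivity)
    have h2 : u / v - 1 = (u - v) / v := by field_simp
    calc Real.log (u / v) ≤ (u - v) / v := by rw [← h2]; exact h1
      _ ≤ |u - v| / v := by gcongr; exact le_abs_self _
      _ ≤ |u - v| / m := by gcongr
  rw [abs_sub_le_iff]
  refine ⟨key u v hu hv, ?_⟩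
  have h := key v u hv hu
  rwa [abs_sub_comm v u] at h

/-- Analytic core of Theorem 5.3 (volume part): if `V : [0,∞) → (0,∞)` is locally
Lipschitz and a.e. (where differentiable) satisfies
`|V' − k²V| ≤ (3/2)k²C₆ e^{−(2/3)k²λ} V`, then for every `λ₀ ≥ 0` with
`(9/4)C₆ e^{−(2/3)k²λ₀} ≤ log(1+δ)` and every `λ ≥ λ₀`,
`(1+δ)⁻¹ ≤ V λ / (V λ₀ e^{k²(λ−λ₀)}) ≤ 1+δ`. -/
theorem volume_growth_core
    (k C₆ δ : ℝ) (hk : 0 < k) (hC₆ : 0 ≤ C₆) (hδ : 0 < δ)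
    (V : ℝ → ℝ)
    (hVpos : ∀ l, 0 ≤ l → 0 < V l)
    (hVlip : ∀ x y : ℝ, 0 ≤ x → ∃ C : NNReal, LipschitzOnWith C V (Set.Icc x y))
    (hae : ∀ᵐ l ∂(volume.restrict (Set.Ici (0 : ℝ))),
      DifferentiableAt ℝ V l →
        |deriv V l - k^2 * V l| ≤ (3/2) * k^2 * C₆ * Real.exp (-(2/3) * k^2 * l) * V l) :
    ∀ l₀ : ℝ, 0 ≤ l₀ → (9/4) * C₆ * Real.exp (-(2/3) * k^2 * l₀) ≤ Real.log (1 + δ) →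
      ∀ l : ℝ, l₀ ≤ l →
        (1 + δ)⁻¹ ≤ V l / (V l₀ * Real.exp (k^2 * (l - l₀))) ∧
        V l / (V l₀ * Real.exp (k^2 * (l - l₀))) ≤ 1 + δ := by
  intro l₀ hl₀ hsmall l hl
  have hVl₀ : 0 < V l₀ := hVpos l₀ hl₀
  have hVl : 0 < V l := hVpos l (hl₀.trans hl)
  have hexp : 0 < Real.exp (k^2 * (l - l₀)) := Real.exp_pos _
  have hR : 0 < V l / (V l₀ * Real.exp (k^2 * (l - l₀))) := by positivity
  have h1δ : (0:ℝ) < 1 + δ := by linarith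
  suffices hkey : |Real.log (V l) - Real.log (V l₀) - k^2 * (l - l₀)| ≤ Real.log (1 + δ) by
    have hlogR : Real.log (V l / (V l₀ * Real.exp (k^2 * (l - l₀)))) =
        Real.log (V l) - Real.log (V l₀) - k^2 * (l - l₀) := by
      rw [Real.log_div hVl.ne' (by positivity), Real.log_mul hVl₀.ne' hexp.ne', Real.log_exp]
      ring
    obtain ⟨hlo, hhi⟩ := abs_le.1 hkey
    constructor
    · calc (1 + δ)⁻¹ = Real.exp (-Real.log (1 + δ)) := by
            rw [Real.exp_neg, Real.exp_log h1δ]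
        _ ≤ Real.exp (Real.log (V l / (V l₀ * Real.exp (k^2 * (l - l₀))))) :=
            Real.exp_le_exp.2 (by rw [hlogR]; linarith)
        _ = V l / (V l₀ * Real.exp (k^2 * (l - l₀))) := Real.exp_log hR
    · calc V l / (V l₀ * Real.exp (k^2 * (l - l₀)))
          = Real.exp (Real.log (V l / (V l₀ * Real.exp (k^2 * (l - l₀))))) :=
            (Real.exp_log hR).symm
        _ ≤ Real.exp (Real.log (1 + δ)) := Real.exp_le_exp.2 (by rw [hlogR]; linarith)
        _ = 1 + δ := Real.exp_log h1δ
  -- Lipschitz data for V on [0, l]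
  obtain ⟨C, hC⟩ := hVlip 0 l le_rfl
  have hVcont : ContinuousOn V (Icc 0 l) := hC.continuousOn
  have hsub : Icc l₀ l ⊆ Icc (0:ℝ) l := Icc_subset_Icc hl₀ le_rfl
  obtain ⟨x₀, hx₀mem, hx₀min⟩ :=
    isCompact_Icc.exists_isMinOn (nonempty_Icc.2 hl) (hVcont.mono hsub)
  have hm0 : 0 < V x₀ := hVpos x₀ (le_trans hl₀ hx₀mem.1)
  have hmle : ∀ y ∈ Icc l₀ l, V x₀ ≤ V y := fun y hy => hx₀min hy
  -- W = log ∘ V is Lipschitz on [l₀, l]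
  set K : NNReal := Real.toNNReal ((C : ℝ) * (V x₀)⁻¹) with hKdef
  have hKcoe : (K : ℝ) = (C : ℝ) * (V x₀)⁻¹ :=
    Real.coe_toNNReal _ (by positivity)
  have hW : LipschitzOnWith K (fun x => Real.log (V x)) (Icc l₀ l) := by
    rw [lipschitzOnWith_iff_dist_le_mul]
    intro x hx y hy
    rw [Real.dist_eq, Real.dist_eq]
    have h1 := abs_log_sub_log_le hm0 (hmle x hx) (hmle y hy)
    have h2 : |V x - V y| ≤ (C : ℝ) * |x - y| := by
      have := hC.dist_le_mul x (hsub hx) y (hsub hy)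
      simpa [Real.dist_eq] using this
    calc |Real.log (V x) - Real.log (V y)| ≤ |V x - V y| / V x₀ := h1
      _ ≤ ((C : ℝ) * |x - y|) / V x₀ := by gcongr
      _ = (K : ℝ) * |x - y| := by rw [hKcoe, div_eq_mul_inv]; ring
  obtain ⟨G, hGlip, hGeq⟩ := hW.extend_real
  have hFTC : G l - G l₀ = ∫ x in l₀..l, deriv G x := lipschitz_ftc hGlip l₀ l
  have hGl : G l = Real.log (V l) := (hGeq ⟨hl, le_rfl⟩).symm
  have hGl₀ : G l₀ = Real.log (V l₀) := (hGeq ⟨le_rfl, hl⟩).symm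
  -- extension of V for a.e. differentiability
  obtain ⟨Vt, hVtlip, hVteq⟩ := hC.extend_real
  set φ : ℝ → ℝ := fun x => (3/2) * k^2 * C₆ * Real.exp (-(2/3) * k^2 * x) with hφdef
  have hφnn : ∀ x, 0 ≤ φ x := fun x => by positivity
  -- a.e. bound for deriv G on the interval
  have haebound : ∀ᵐ x ∂(volume : Measure ℝ), x ∈ Set.uIoc l₀ l → |deriv G x - k^2| ≤ φ x := by
    have h0 : ∀ᵐ x ∂(volume : Measure ℝ), x ∈ Ici (0:ℝ) →
        (DifferentiableAt ℝ V x →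
          |deriv V x - k^2 * V x| ≤ (3/2) * k^2 * C₆ * Real.exp (-(2/3) * k^2 * x) * V x) :=
      (ae_restrict_iff' measurableSet_Ici).1 hae
    have hdiffVt := hVtlip.ae_differentiableAt (μ := (volume : Measure ℝ))
    have hlne : ∀ᵐ x : ℝ ∂volume, x ≠ l := by
      rw [ae_iff]
      simpa [not_not, Set.setOf_eq_eq_singleton] using measure_singleton (l : ℝ)
    filter_upwards [h0, hdiffVt, hlne] with x hx hdx hxl hmem
    rw [Set.uIoc_of_le hl] at hmem
    have hxIoo : x ∈ Ioo l₀ l := ⟨hmem.1, lt_of_le_of_ne hmem.2 hxl⟩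
    have hx0 : 0 < x := lt_of_le_of_lt hl₀ hxIoo.1
    have hnbhd : Icc (0:ℝ) l ∈ nhds x := Icc_mem_nhds hx0 hxIoo.2
    have hVVt : V =ᶠ[nhds x] Vt := Filter.eventuallyEq_of_mem hnbhd (fun y hy => hVteq hy)
    have hVdiff : DifferentiableAt ℝ V x := hVVt.differentiableAt_iff.2 hdx
    have hVx : 0 < V x := hVpos x hx0.le
    have hlogd : HasDerivAt (fun y => Real.log (V y)) ((V x)⁻¹ * deriv V x) x :=
      (Real.hasDerivAt_log hVx.ne').comp x hVdiff.hasDerivAt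
    have hnbhd2 : Icc l₀ l ∈ nhds x := Icc_mem_nhds hxIoo.1 hxIoo.2
    have hWG : (fun y => Real.log (V y)) =ᶠ[nhds x] G :=
      Filter.eventuallyEq_of_mem hnbhd2 (fun y hy => hGeq hy)
    have hGd : HasDerivAt G ((V x)⁻¹ * deriv V x) x := hlogd.congr_of_eventuallyEq hWG.symm
    rw [hGd.deriv]
    have hb := hx hx0.le hVdiff
    have heq : (V x)⁻¹ * deriv V x - k^2 = (deriv V x - k^2 * V x) / V x := by
      field_simp
    rw [heq, abs_div, abs_of_pos hVx, div_le_iff₀ hVx]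
    exact hb
  -- integrability of deriv G
  have hGmeas : Measurable (deriv G) := measurable_deriv G
  have hGbdd : ∀ x : ℝ, ‖deriv G x‖ ≤ (K : ℝ) := fun x => norm_deriv_le_of_lipschitz hGlip
  have hintG : IntervalIntegrable (deriv G) volume l₀ l := by
    rw [intervalIntegrable_iff]
    refine MeasureTheory.Integrable.mono' (g := fun _ => (K : ℝ)) ?_
      hGmeas.aestronglyMeasurable.restrict (Filter.Eventually.of_forall fun x => hGbdd x)
    exact (integrableOn_const_iff).2 (Or.inr (by rw [Set.uIoc_of_le hl]; exact measure_Ioc_lt_top))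
  -- value of ∫ φ
  have hφcont : Continuous φ := by fun_prop
  have hφint : IntervalIntegrable φ volume l₀ l := hφcont.intervalIntegrable _ _
  have hφval : (∫ x in l₀..l, φ x) =
      (9/4) * C₆ * Real.exp (-(2/3) * k^2 * l₀) - (9/4) * C₆ * Real.exp (-(2/3) * k^2 * l) := by
    have hP : ∀ x : ℝ, HasDerivAt (fun y => -(9/4) * C₆ * Real.exp (-(2/3) * k^2 * y)) (φ x) x := by
      intro x
      have h1 := HasDerivAt.const_mul (-(2/3) * k^2 : ℝ) (hasDerivAt_id x)
      simp only [id_eq, mul_one] at h1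
      have h3 := h1.exp.const_mul (-(9/4) * C₆)
      refine h3.congr_deriv ?_
      simp only [hφdef]
      ring
    rw [intervalIntegral.integral_eq_sub_of_hasDerivAt (fun x _ => hP x) hφint]
    ring
  -- the main estimate
  have hmain : |(G l - G l₀) - k^2 * (l - l₀)| ≤ Real.log (1 + δ) := by
    have h1 : (G l - G l₀) - k^2 * (l - l₀) = ∫ x in l₀..l, (deriv G x - k^2) := by
      rw [intervalIntegral.integral_sub hintG intervalIntegrable_const, ← hFTC,
        intervalIntegral.integral_const]
      simp [smul_eq_mul]
      ring
    rw [h1]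
    have h2 : ‖∫ x in l₀..l, (deriv G x - k^2)‖ ≤ |∫ x in l₀..l, φ x| := by
      apply intervalIntegral.norm_integral_le_abs_of_norm_le _ hφint
      rw [ae_restrict_iff' measurableSet_uIoc]
      filter_upwards [haebound] with x hx hmem
      simpa [Real.norm_eq_abs] using hx hmem
    rw [Real.norm_eq_abs] at h2
    refine h2.trans ?_
    have hexple : 0 ≤ (9/4) * C₆ * Real.exp (-(2/3) * k^2 * l) := by positivity
    rw [hφval, abs_of_nonneg ?_]
    · linarith
    · have hmono : Real.exp (-(2/3) * k^2 * l) ≤ Real.exp (-(2/3) * k^2 * l₀) := by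
        apply Real.exp_le_exp.2
        nlinarith [sq_nonneg k, hk]
      nlinarith
  rw [hGl, hGl₀] at hmain
  exact hmain
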